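/- arXiv:1909.07534 — 4 statements merged into one kernel-verified Lean document; each statement's English description precedes it below -/
import Mathlib

section
/- Let A₁ and A₂ be Hermitian complex square matrices with A₁² = I and A₂² = I. Then for every matrix M of the appropriate size, i·((A₁⊗A₂)M − M(A₁⊗A₂)) = (1/8) · Σ_{α₁,α₂∈{±1}} α₁α₂ · [ ((I+α₁A₁)⊗(I+iα₂A₂)) M ((I+α₁A₁)⊗(I+iα₂A₂))† + ((I+iα₁A₁)⊗(I+α₂A₂)) M ((I+iα₁A₁)⊗(I+α₂A₂))† ]. -/
open Matrix Kronecker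

lemma kron_conjT {n m : ℕ} (A : Matrix (Fin n) (Fin n) ℂ) (B : Matrix (Fin m) (Fin m) ℂ) :
    (A ⊗ₖ B)ᴴ = Aᴴ ⊗ₖ Bᴴ := by
  ext ⟨i, j⟩ ⟨k, l⟩
  simp [Matrix.conjTranspose_apply, Matrix.kroneckerMap_apply, star_mul', mul_comm]

set_option maxHeartbeats 2000000 in
theorem stmt_5 (n m : ℕ)
    (A₁ : Matrix (Fin n) (Fin n) ℂ) (A₂ : Matrix (Fin m) (Fin m) ℂ)
    (hA₁ : A₁ * A₁ = 1) (hA₂ : A₂ * A₂ = 1)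
    (hH₁ : A₁.IsHermitian) (hH₂ : A₂.IsHermitian)
    (M : Matrix (Fin n × Fin m) (Fin n × Fin m) ℂ) :
    let T : Matrix (Fin n × Fin m) (Fin n × Fin m) ℂ := A₁ ⊗ₖ A₂
    Complex.I • (T * M - M * T) =
      ((8 : ℂ))⁻¹ • ∑ α₁ ∈ ({1, -1} : Finset ℂ), ∑ α₂ ∈ ({1, -1} : Finset ℂ),
        (α₁ * α₂) •
          ((((1 + α₁ • A₁) ⊗ₖ (1 + (Complex.I * α₂) • A₂)) * M *
              (((1 + α₁ • A₁) ⊗ₖ (1 + (Complex.I * α₂) • A₂)))ᴴ) +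
            (((1 + (Complex.I * α₁) • A₁) ⊗ₖ (1 + α₂ • A₂)) * M *
              (((1 + (Complex.I * α₁) • A₁) ⊗ₖ (1 + α₂ • A₂)))ᴴ)) := by
  intro T
  have hne : (1 : ℂ) ≠ -1 := by norm_num
  simp only [Finset.sum_pair hne]
  simp only [kron_conjT, conjTranspose_add, conjTranspose_one, conjTranspose_smul, hH₁.eq,
    hH₂.eq, mul_one, mul_neg_one, star_neg, star_one, Complex.star_def, Complex.conj_I]
  simp only [Matrix.add_kronecker, Matrix.kronecker_add, Matrix.smul_kronecker,
    Matrix.kronecker_smul, Matrix.one_kronecker_one, T]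
  simp only [mul_add, add_mul, mul_neg, neg_mul, smul_neg, mul_smul_comm, smul_mul_assoc, smul_add, smul_smul, smul_sub,
    one_mul, mul_one, one_smul, neg_smul, neg_neg, mul_assoc]
  match_scalars <;> (try ring_nf) <;> (try simp [Complex.I_sq]) <;> (try ring_nf) <;> (try ring1)
end

section
/- Let A₁ and A₂ be Hermitian complex square matrices with A₁² = I and A₂² = I, and let θ be real. Then for every matrix M, exp(iθ A₁⊗A₂) M exp(−iθ A₁⊗A₂) = cos²θ·M + sin²θ·(A₁⊗A₂)M(A₁⊗A₂) + (cosθ·sinθ/8)·Σ_{α₁,α₂∈{±1}} α₁α₂ [ ((I+α₁A₁)⊗(I+iα₂A₂)) M ((I+α₁A₁)⊗(I+iα₂A₂))† + ((I+iα₁A₁)⊗(I+α₂A₂)) M ((I+iα₁A₁)⊗(I+α₂A₂))† ]. -/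
open Matrix Kronecker

open NormedSpace in
lemma exp_smul_of_invol {N : Type*} [Fintype N] [DecidableEq N]
    (T : Matrix N N ℂ) (hT : T * T = 1) (z : ℂ) :
    NormedSpace.exp (z • T) =
      ((Complex.exp z + Complex.exp (-z)) / 2) • (1 : Matrix N N ℂ) +
        ((Complex.exp z - Complex.exp (-z)) / 2) • T := by
  letI : SeminormedRing (Matrix N N ℂ) := Matrix.linftyOpSemiNormedRing
  letI : NormedRing (Matrix N N ℂ) := Matrix.linftyOpNormedRing
  letI : NormedAlgebra ℂ (Matrix N N ℂ) := Matrix.linftyOpNormedAlgebra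
  let f : ℂ × ℂ →+* Matrix N N ℂ :=
  { toFun := fun p => p.1 • ((2⁻¹:ℂ) • ((1:Matrix N N ℂ) + (1:ℂ) • T))
      + p.2 • ((2⁻¹:ℂ) • ((1:Matrix N N ℂ) + (-1:ℂ) • T))
    map_one' := by
      show (1:ℂ × ℂ).1 • _ + (1:ℂ × ℂ).2 • _ = _
      simp only [Prod.fst_one, Prod.snd_one]
      match_scalars <;> ring
    map_mul' := by
      intro p q
      show (p*q).1 • _ + (p*q).2 • _ = _
      simp only [Prod.fst_mul, Prod.snd_mul, smul_smul, mul_add, add_mul, smul_mul_assoc,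
        mul_smul_comm, mul_one, one_mul, hT]
      match_scalars <;> ring
    map_zero' := by
      show (0:ℂ × ℂ).1 • _ + (0:ℂ × ℂ).2 • _ = _
      simp
    map_add' := by
      intro p q
      show (p+q).1 • _ + (p+q).2 • _ = _
      simp only [Prod.fst_add, Prod.snd_add, add_smul]
      abel }
  have hf : Continuous f :=
    (continuous_fst.smul continuous_const).add (continuous_snd.smul continuous_const)
  have hfz : f (z, -z) = z • T := by
    simp only [f, RingHom.coe_mk, MonoidHom.coe_mk, OneHom.coe_mk]
    match_scalars <;> ring
  have h1 : NormedSpace.exp ((z, -z) : ℂ × ℂ) = (Complex.exp z, Complex.exp (-z)) := by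
    have e1 := Prod.fst_exp ((z, -z) : ℂ × ℂ)
    have e2 := Prod.snd_exp ((z, -z) : ℂ × ℂ)
    have h := congrFun Complex.exp_eq_exp_ℂ
    exact Prod.ext (by rw [e1, ← h]) (by rw [e2, ← h])
  calc NormedSpace.exp (z • T) = NormedSpace.exp (f (z, -z)) := by rw [hfz]
    _ = f (NormedSpace.exp ((z, -z) : ℂ × ℂ)) := (map_exp f hf _).symm
    _ = f (Complex.exp z, Complex.exp (-z)) := by rw [h1]
    _ = _ := by
        simp only [f, RingHom.coe_mk, MonoidHom.coe_mk, OneHom.coe_mk]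
        match_scalars <;> ring
theorem stmt_6 (n m : ℕ)
    (A₁ : Matrix (Fin n) (Fin n) ℂ) (A₂ : Matrix (Fin m) (Fin m) ℂ)
    (hA₁ : A₁ * A₁ = 1) (hA₂ : A₂ * A₂ = 1)
    (hH₁ : A₁.IsHermitian) (hH₂ : A₂.IsHermitian) (θ : ℝ)
    (M : Matrix (Fin n × Fin m) (Fin n × Fin m) ℂ) :
    let T : Matrix (Fin n × Fin m) (Fin n × Fin m) ℂ := A₁ ⊗ₖ A₂
    NormedSpace.exp ((Complex.I * (θ : ℂ)) • T) * M *
        NormedSpace.exp ((-(Complex.I * (θ : ℂ))) • T) =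
      ((Real.cos θ : ℂ) ^ 2) • M + ((Real.sin θ : ℂ) ^ 2) • (T * M * T) +
        (((Real.cos θ : ℂ) * (Real.sin θ : ℂ)) / 8) •
          ∑ α₁ ∈ ({1, -1} : Finset ℂ), ∑ α₂ ∈ ({1, -1} : Finset ℂ),
            (α₁ * α₂) •
              ((((1 + α₁ • A₁) ⊗ₖ (1 + (Complex.I * α₂) • A₂)) * M *
                  (((1 + α₁ • A₁) ⊗ₖ (1 + (Complex.I * α₂) • A₂)))ᴴ) +
                (((1 + (Complex.I * α₁) • A₁) ⊗ₖ (1 + α₂ • A₂)) * M *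
                  (((1 + (Complex.I * α₁) • A₁) ⊗ₖ (1 + α₂ • A₂)))ᴴ)) := by
  intro T
  have hTd : T = A₁ ⊗ₖ A₂ := rfl
  have hT : T * T = 1 := by
    rw [hTd, ← Matrix.mul_kronecker_mul, hA₁, hA₂, Matrix.one_kronecker_one]
  have h12 : ((1:ℂ)) ≠ -1 := by norm_num
  have hexp : Complex.exp (Complex.I * (θ:ℂ))
      = (Real.cos θ : ℂ) + (Real.sin θ : ℂ) * Complex.I := by
    rw [mul_comm, Complex.exp_mul_I, ← Complex.ofReal_cos, ← Complex.ofReal_sin]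
  have hexp' : Complex.exp (-(Complex.I * (θ:ℂ)))
      = (Real.cos θ : ℂ) - (Real.sin θ : ℂ) * Complex.I := by
    rw [show -(Complex.I * (θ:ℂ)) = ((-θ:ℝ):ℂ) * Complex.I by push_cast; ring,
      Complex.exp_mul_I, ← Complex.ofReal_cos, ← Complex.ofReal_sin,
      Real.cos_neg, Real.sin_neg]
    push_cast
    ring
  have hkct : ∀ (A : Matrix (Fin n) (Fin n) ℂ) (B : Matrix (Fin m) (Fin m) ℂ),
      (A ⊗ₖ B)ᴴ = Aᴴ ⊗ₖ Bᴴ := by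
    intro A B
    ext ⟨i, j⟩ ⟨k, l⟩
    simp [Matrix.conjTranspose_apply, Matrix.kroneckerMap_apply, mul_comm]
  rw [exp_smul_of_invol T hT, exp_smul_of_invol T hT]
  simp only [neg_neg]
  rw [hexp, hexp']
  simp only [Finset.sum_pair h12, hkct, Matrix.conjTranspose_add, Matrix.conjTranspose_smul,
    Matrix.conjTranspose_one, hH₁.eq, hH₂.eq, star_mul', star_one, star_neg, Complex.star_def,
    Complex.conj_I, _root_.map_one, _root_.map_neg, Matrix.add_kronecker, Matrix.kronecker_add, Matrix.smul_kronecker,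
    Matrix.kronecker_smul, Matrix.one_kronecker_one, hTd]
  simp only [mul_add, add_mul, smul_mul_assoc, mul_smul_comm, smul_smul, mul_one, one_mul,
    smul_add, mul_assoc]
  match_scalars <;> (try ring_nf) <;>
    try (simp [Complex.I_sq, _root_.map_one, _root_.map_neg]; try ring_nf)
end

section
/- Let A₁ and A₂ be Hermitian complex square matrices with A₁² = I and A₂² = I, and set P = I + A₁⊗A₂. Then for every matrix M, P M P = M + (A₁⊗A₂)M(A₁⊗A₂) + (1/8)·Σ_{α₁,α₂∈{±1}} α₁α₂ [ ((I+α₁A₁)⊗(I+α₂A₂)) M ((I+α₁A₁)⊗(I+α₂A₂))† − ((I+iα₁A₁)⊗(I+iα₂A₂)) M ((I+iα₁A₁)⊗(I+iα₂A₂))† ]. -/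
open Matrix Kronecker

set_option maxHeartbeats 2000000 in
theorem stmt_8 (n m : ℕ)
    (A₁ : Matrix (Fin n) (Fin n) ℂ) (A₂ : Matrix (Fin m) (Fin m) ℂ)
    (hA₁ : A₁ * A₁ = 1) (hA₂ : A₂ * A₂ = 1)
    (hH₁ : A₁.IsHermitian) (hH₂ : A₂.IsHermitian)
    (M : Matrix (Fin n × Fin m) (Fin n × Fin m) ℂ) :
    let T : Matrix (Fin n × Fin m) (Fin n × Fin m) ℂ := A₁ ⊗ₖ A₂
    let P := (1 : Matrix (Fin n × Fin m) (Fin n × Fin m) ℂ) + T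
    P * M * P =
      M + T * M * T +
        ((8 : ℂ))⁻¹ • ∑ α₁ ∈ ({1, -1} : Finset ℂ), ∑ α₂ ∈ ({1, -1} : Finset ℂ),
          (α₁ * α₂) •
            ((((1 + α₁ • A₁) ⊗ₖ (1 + α₂ • A₂)) * M *
                (((1 + α₁ • A₁) ⊗ₖ (1 + α₂ • A₂)))ᴴ) -
              (((1 + (Complex.I * α₁) • A₁) ⊗ₖ (1 + (Complex.I * α₂) • A₂)) * M *
                (((1 + (Complex.I * α₁) • A₁) ⊗ₖ (1 + (Complex.I * α₂) • A₂)))ᴴ)) := by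
  intro T P
  set B₁ := A₁ ⊗ₖ (1 : Matrix (Fin m) (Fin m) ℂ) with hB₁
  set B₂ := (1 : Matrix (Fin n) (Fin n) ℂ) ⊗ₖ A₂ with hB₂
  have hkron : ∀ c d : ℂ, (1 + c • A₁) ⊗ₖ (1 + d • A₂)
      = 1 + c • B₁ + d • B₂ + (c * d) • T := by
    intro c d
    simp only [hB₁, hB₂, kronecker_add, add_kronecker, smul_kronecker, kronecker_smul,
      one_kronecker_one, smul_smul, T]
    module
  have hB₁H : B₁ᴴ = B₁ := by rw [hB₁, kron_conjT, hH₁.eq, conjTranspose_one]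
  have hB₂H : B₂ᴴ = B₂ := by rw [hB₂, kron_conjT, hH₂.eq, conjTranspose_one]
  have hTH : Tᴴ = T := by show (A₁ ⊗ₖ A₂)ᴴ = _; rw [kron_conjT, hH₁.eq, hH₂.eq]
  simp only [Finset.sum_pair (show (1:ℂ) ≠ -1 by norm_num), hkron, conjTranspose_add, conjTranspose_smul, conjTranspose_neg, conjTranspose_one, hB₁H, hB₂H, hTH, Complex.star_def, Complex.conj_I, Complex.I_mul_I]
  simp only [_root_.map_mul, _root_.map_one, _root_.map_neg, Complex.conj_I, mul_one, one_mul, one_smul,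
    neg_smul, neg_neg, mul_neg, neg_mul, map_ofNat]
  show (1 + T) * M * (1 + T) = _
  simp only [mul_add, add_mul, sub_mul, mul_sub, smul_mul_assoc, mul_smul_comm, one_mul,
    mul_one, smul_sub, smul_add, smul_smul, mul_assoc, smul_neg, neg_smul, neg_neg,
    neg_mul, mul_neg, Complex.I_mul_I, mul_neg_one, neg_one_mul,
    add_sub_cancel_left]
  match_scalars <;> ring
end

section
/- Let A₁ and A₂ be Hermitian 2×2 matrices with A₁² = I and A₂² = I, θ real, and U = exp(iθ A₁⊗A₂). Then for every 4×4 positive semidefinite ρ with Tr(ρ)=1 and every Hermitian 4×4 matrix O, Tr(O·UρU†) = cos²θ·Tr(Oρ) + sin²θ·Tr(O·(A₁⊗A₂)ρ(A₁⊗A₂)) + (cosθ·sinθ/8)·Σ_{α₁,α₂∈{±1}} α₁α₂·[ Tr(O·((I+α₁A₁)⊗(I+iα₂A₂))ρ((I+α₁A₁)⊗(I+iα₂A₂))†) + Tr(O·((I+iα₁A₁)⊗(I+α₂A₂))ρ((I+iα₁A₁)⊗(I+α₂A₂))†) ]. -/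
open Matrix Kronecker
open scoped ComplexOrder

set_option linter.unusedSectionVars false in
lemma kron_conjTranspose {m n : Type*} (A : Matrix m m ℂ) (B : Matrix n n ℂ) :
    (A ⊗ₖ B)ᴴ = Aᴴ ⊗ₖ Bᴴ := by
  ext ⟨i, j⟩ ⟨k, l⟩
  simp [Matrix.conjTranspose_apply, Matrix.kroneckerMap_apply, mul_comm]

lemma exp_smul_involutive {n : Type*} [Fintype n] [DecidableEq n]
    (T : Matrix n n ℂ) (hT : T * T = 1) (z : ℂ) :
    NormedSpace.exp (z • T) = Complex.cosh z • 1 + Complex.sinh z • T := by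
  rw [NormedSpace.exp_eq_tsum ℂ]
  refine HasSum.tsum_eq ?_
  have hTpow : ∀ k : ℕ, T ^ (2 * k) = 1 := fun k => by
    rw [pow_mul, sq, hT, one_pow]
  refine HasSum.even_add_odd ?_ ?_
  · have h := (Complex.hasSum_cosh z).smul_const (1 : Matrix n n ℂ)
    convert h using 2 with k
    · rfl
    rw [smul_pow, hTpow, smul_smul]
    congr 1
    ring
  · have h := (Complex.hasSum_sinh z).smul_const T
    convert h using 2 with k
    · rfl
    have hodd : T ^ (2 * k + 1) = T := by rw [pow_succ, hTpow, one_mul]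
    rw [smul_pow, hodd, smul_smul]
    congr 1
    ring

theorem stmt_16 (A₁ A₂ : Matrix (Fin 2) (Fin 2) ℂ)
    (hH₁ : A₁.IsHermitian) (hH₂ : A₂.IsHermitian)
    (hA₁ : A₁ * A₁ = 1) (hA₂ : A₂ * A₂ = 1) (θ : ℝ)
    (ρ O : Matrix (Fin 2 × Fin 2) (Fin 2 × Fin 2) ℂ)
    (hρ : ρ.PosSemidef) (hρtr : ρ.trace = 1) (hO : O.IsHermitian) :
    let T : Matrix (Fin 2 × Fin 2) (Fin 2 × Fin 2) ℂ := A₁ ⊗ₖ A₂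
    let U := NormedSpace.exp ((Complex.I * (θ : ℂ)) • T)
    (O * (U * ρ * Uᴴ)).trace =
      ((Real.cos θ : ℂ) ^ 2) * (O * ρ).trace +
        ((Real.sin θ : ℂ) ^ 2) * (O * (T * ρ * T)).trace +
        (((Real.cos θ : ℂ) * (Real.sin θ : ℂ)) / 8) *
          ∑ α₁ ∈ ({1, -1} : Finset ℂ), ∑ α₂ ∈ ({1, -1} : Finset ℂ),
            (α₁ * α₂) *
              ((O * (((1 + α₁ • A₁) ⊗ₖ (1 + (Complex.I * α₂) • A₂)) * ρ *
                  (((1 + α₁ • A₁) ⊗ₖ (1 + (Complex.I * α₂) • A₂)))ᴴ)).trace +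
                (O * (((1 + (Complex.I * α₁) • A₁) ⊗ₖ (1 + α₂ • A₂)) * ρ *
                  (((1 + (Complex.I * α₁) • A₁) ⊗ₖ (1 + α₂ • A₂)))ᴴ)).trace) := by
  intro T U
  have hTdef : A₁ ⊗ₖ A₂ = T := rfl
  have hT1 : T * T = 1 := by
    rw [← hTdef, ← Matrix.mul_kronecker_mul, hA₁, hA₂, Matrix.one_kronecker_one]
  have hTH : Tᴴ = T := by
    rw [← hTdef, kron_conjTranspose, hH₁.eq, hH₂.eq]
  have hU : U = (Real.cos θ : ℂ) • (1 : Matrix (Fin 2 × Fin 2) (Fin 2 × Fin 2) ℂ)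
      + (Complex.I * (Real.sin θ : ℂ)) • T := by
    show NormedSpace.exp ((Complex.I * (θ : ℂ)) • T) = _
    rw [mul_comm Complex.I (θ : ℂ), exp_smul_involutive T hT1, Complex.cosh_mul_I,
      Complex.sinh_mul_I, ← Complex.ofReal_cos, ← Complex.ofReal_sin, mul_comm]
  have hUH : Uᴴ = (Real.cos θ : ℂ) • (1 : Matrix (Fin 2 × Fin 2) (Fin 2 × Fin 2) ℂ)
      - (Complex.I * (Real.sin θ : ℂ)) • T := by
    rw [hU]
    rw [Matrix.conjTranspose_add, Matrix.conjTranspose_smul, Matrix.conjTranspose_smul,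
      Matrix.conjTranspose_one, hTH, sub_eq_add_neg, ← neg_smul]
    congr 1
    · congr 1
      simp [Complex.ext_iff]
    · congr 1
      simp [Complex.ext_iff]
  rw [hUH, hU, Finset.sum_pair (show (1 : ℂ) ≠ -1 by norm_num)]
  simp only [Finset.sum_pair (show (1 : ℂ) ≠ -1 by norm_num)]
  simp only [kron_conjTranspose, Matrix.conjTranspose_add, Matrix.conjTranspose_smul,
    Matrix.conjTranspose_one, hH₁.eq, hH₂.eq, Matrix.add_kronecker, Matrix.kronecker_add,
    Matrix.smul_kronecker, Matrix.kronecker_smul, Matrix.one_kronecker_one,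
    hTdef,
    Matrix.conjTranspose_neg, star_mul', Complex.conj_I, star_one, star_neg,
    RCLike.star_def, Complex.conj_ofReal,
    smul_smul, one_smul, mul_one, one_mul, neg_neg, mul_neg, neg_mul]
  simp only [hTH, Matrix.mul_add, Matrix.add_mul, Matrix.mul_sub, Matrix.sub_mul,
    Matrix.mul_neg, Matrix.neg_mul, Matrix.smul_mul, Matrix.mul_smul, Matrix.mul_one,
    Matrix.one_mul, smul_smul, neg_neg, smul_neg, neg_smul,
    Matrix.mul_assoc, Matrix.trace_add, Matrix.trace_sub, Matrix.trace_neg,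
    Matrix.trace_smul, smul_eq_mul]
  ring_nf
  simp only [Complex.I_sq]
  ring
end
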